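/- Let I=(A,B,≻,q) be a school matching instance with n = |A|+|B| agents. Then the number of rotations satisfies |R(I)| ≤ n². -/

import Mathlib

open Classical
open scoped ENNReal

noncomputable section

namespace SM

/-- A school matching instance: students `A`, schools `B`, strict preference
orders over the other side plus the outside option `∅` (encoded as `none`),
and quotas `q b ≤ |A|`. -/
structure SchoolInstance (A B : Type) [Fintype A] [Fintype B] where
  prefA : A → Option B → Option B → Prop
  prefB : B → Option A → Option A → Prop
  prefA_sto : ∀ a, IsStrictTotalOrder (Option B) (prefA a)
  prefB_sto : ∀ b, IsStrictTotalOrder (Option A) (prefB b)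
  q : B → ℕ
  q_le : ∀ b, q b ≤ Fintype.card A

variable {A B : Type} [Fintype A] [Fintype B] [DecidableEq A] [DecidableEq B]

/-- A matching: every student is assigned a school or the outside option, and
each school receives at most `q b` students.  (A school is implicitly paired
with the outside option exactly when it has strictly fewer than `q b`
students, and a student is paired with the outside option exactly when it has
no school; this determines the set of pairs of the matching.) -/
structure Matching {A B : Type} [Fintype A] [Fintype B] (I : SchoolInstance A B) where
  toFun : A → Option B
  quota : ∀ b : B, (Finset.univ.filter fun a => toFun a = some b).card ≤ I.q b

instance (I : SchoolInstance A B) : Nonempty (Matching I) := by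
  refine ⟨⟨fun _ => none, fun b => ?_⟩⟩
  have h : (Finset.univ.filter fun _ : A => (none : Option B) = some b) = ∅ :=
    Finset.filter_false_of_mem (by intro a _; simp)
  rw [h, Finset.card_empty]
  exact Nat.zero_le _

/-- The students assigned to school `b`. -/
def assignedTo (I : SchoolInstance A B) (M : Matching I) (b : B) : Finset A :=
  Finset.univ.filter fun a => M.toFun a = some b

/-- School `b` has strictly fewer than `q b` students, i.e. is also paired
with the outside option. -/
def hasSlack (I : SchoolInstance A B) (M : Matching I) (b : B) : Prop :=
  (assignedTo I M b).card < I.q b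

/-- `x ∈ M(b)`: the partners of school `b` (students assigned to it, plus the
outside option when it is under quota). -/
def inPartners (I : SchoolInstance A B) (M : Matching I) (b : B) (x : Option A) : Prop :=
  (∃ a : A, x = some a ∧ M.toFun a = some b) ∨ (x = none ∧ hasSlack I M b)

/-- `M(b)` as a set. -/
def partnersSet (I : SchoolInstance A B) (M : Matching I) (b : B) : Set (Option A) :=
  {x | inPartners I M b x}

/-- The pair `ab` blocks `M`. -/
def BlocksPair (I : SchoolInstance A B) (M : Matching I) (a : A) (b : B) : Prop :=
  I.prefA a (some b) (M.toFun a) ∧ ∃ x, inPartners I M b x ∧ I.prefB b (some a) x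

/-- Student `a` blocks `M` (prefers the outside option to its partner). -/
def BlocksStudent (I : SchoolInstance A B) (M : Matching I) (a : A) : Prop :=
  I.prefA a none (M.toFun a)

/-- School `b` blocks `M` (prefers the outside option to one of its partners). -/
def BlocksSchool (I : SchoolInstance A B) (M : Matching I) (b : B) : Prop :=
  ∃ a : A, M.toFun a = some b ∧ I.prefB b none (some a)

/-- Stability: no blocking pair and no blocking agent. -/
def Stable (I : SchoolInstance A B) (M : Matching I) : Prop :=
  (¬ ∃ a b, BlocksPair I M a b) ∧ (¬ ∃ a, BlocksStudent I M a) ∧ (¬ ∃ b, BlocksSchool I M b)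

/-- `M ≥ M'`: every student weakly prefers `M` to `M'`. -/
def matGE (I : SchoolInstance A B) (M M' : Matching I) : Prop :=
  ∀ a : A, M.toFun a = M'.toFun a ∨ I.prefA a (M.toFun a) (M'.toFun a)

/-- `M' < M` in the student order. -/
def matLT (I : SchoolInstance A B) (M' M : Matching I) : Prop :=
  matGE I M M' ∧ M'.toFun ≠ M.toFun

/-- `M'` is an immediate predecessor of `M` in `(S(I), ≥)`. -/
def ImmPred (I : SchoolInstance A B) (M' M : Matching I) : Prop :=
  Stable I M' ∧ Stable I M ∧ matLT I M' M ∧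
    ¬ ∃ M'' : Matching I, Stable I M'' ∧ matLT I M' M'' ∧ matLT I M'' M

/-- The type in which rotations live: pairs `(ρ₊, ρ₋)` of sets of
student/school pairs (with the outside option allowed on either side). -/
abbrev Rot (A B : Type) : Type :=
  Finset (Option A × Option B) × Finset (Option A × Option B)

/-- The set of pairs of a matching: each student with its partner, and each
under-quota school with the outside option. -/
def pairsOf (I : SchoolInstance A B) (M : Matching I) : Finset (Option A × Option B) :=
  Finset.univ.filter fun p =>
    (∃ a : A, p = (some a, M.toFun a)) ∨ (∃ b : B, hasSlack I M b ∧ p = (none, some b))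

/-- The rotation `ρ(M, M') = (M ∖ M', M' ∖ M)`. -/
def rho (I : SchoolInstance A B) (M M' : Matching I) : Rot A B :=
  (pairsOf I M \ pairsOf I M', pairsOf I M' \ pairsOf I M)

/-- `R(I)`: the set of all rotations of `I`. -/
def RotSet (I : SchoolInstance A B) : Set (Rot A B) :=
  {r | ∃ M M' : Matching I, ImmPred I M' M ∧ r = rho I M M'}

/-- `c` is a maximal chain of stable matchings from `M0` down to `M`:
consecutive entries are immediate predecessors. -/
def chainTo (I : SchoolInstance A B) (M0 M : Matching I) (c : List (Matching I)) : Prop :=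
  c.head? = some M0 ∧ c.getLast? = some M ∧ (∀ N ∈ c, Stable I N) ∧
    List.Chain' (fun X Y => ImmPred I Y X) c

/-- The set of rotations eliminated along the chain `c`. -/
def chainRots (I : SchoolInstance A B) (c : List (Matching I)) : Set (Rot A B) :=
  {r | ∃ (i : ℕ) (X Y : Matching I), getElem? c i = some X ∧ getElem? c (i + 1) = some Y ∧ r = rho I X Y}

/-- `ρ` is exposed in `M`. -/
def Exposed (I : SchoolInstance A B) (r : Rot A B) (M : Matching I) : Prop :=
  ∃ M', ImmPred I M' M ∧ r = rho I M M'

/-- The rotation poset `ρ ⊵ ρ'` (relative to the rotation-set map `RM`):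
either `ρ = ρ'`, or `ρ ∈ R_M` for every stable `M` in which `ρ'` is exposed. -/
def domRel (I : SchoolInstance A B) (RM : Matching I → Set (Rot A B)) (r r' : Rot A B) : Prop :=
  r = r' ∨ ∀ M, Stable I M → Exposed I r' M → r ∈ RM M

/-- `ρ ▷ ρ'`. -/
def strictDom (I : SchoolInstance A B) (RM : Matching I → Set (Rot A B)) (r r' : Rot A B) : Prop :=
  domRel I RM r r' ∧ r ≠ r'

/-- `R ⊆ R(I)` is upper-closed in the rotation poset. -/
def UpperClosed (I : SchoolInstance A B) (RM : Matching I → Set (Rot A B))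
    (R : Set (Rot A B)) : Prop :=
  R ⊆ RotSet I ∧ ∀ r' ∈ R, ∀ r ∈ RotSet I, domRel I RM r r' → r ∈ R

/-- `N` is the join `M ∨ M'` (least upper bound) in `(S(I), ≥)`. -/
def IsJoin (I : SchoolInstance A B) (M M' N : Matching I) : Prop :=
  Stable I N ∧ matGE I N M ∧ matGE I N M' ∧
    ∀ P, Stable I P → matGE I P M → matGE I P M' → matGE I P N

/-- `N` is the meet `M ∧ M'` (greatest lower bound) in `(S(I), ≥)`. -/
def IsMeet (I : SchoolInstance A B) (M M' N : Matching I) : Prop :=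
  Stable I N ∧ matGE I M N ∧ matGE I M' N ∧
    ∀ P, Stable I P → matGE I M P → matGE I M' P → matGE I N P

/-- `F` is a (nonempty) sublattice of the lattice of stable matchings. -/
def IsSublattice (I : SchoolInstance A B) (F : Set (Matching I)) : Prop :=
  F.Nonempty ∧ (∀ M ∈ F, Stable I M) ∧
    (∀ M ∈ F, ∀ M' ∈ F, ∃ N ∈ F, IsJoin I M M' N) ∧
    (∀ M ∈ F, ∀ M' ∈ F, ∃ N ∈ F, IsMeet I M M' N)

/-- `ρ ~ ρ'`: the two rotations are eliminated together in every matching of `F`. -/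
def rotEquiv (I : SchoolInstance A B) (RM : Matching I → Set (Rot A B))
    (F : Set (Matching I)) (r r' : Rot A B) : Prop :=
  ∀ M ∈ F, (r ∈ RM M ↔ r' ∈ RM M)

/-- The trivial meta-rotation `θ₀^F` of rotations eliminated in every matching of `F`. -/
def theta0 (I : SchoolInstance A B) (RM : Matching I → Set (Rot A B))
    (F : Set (Matching I)) : Set (Rot A B) :=
  {r | r ∈ RotSet I ∧ ∀ M ∈ F, r ∈ RM M}

/-- The trivial meta-rotation `θ_z^F` of rotations eliminated in no matching of `F`. -/
def thetaZ (I : SchoolInstance A B) (RM : Matching I → Set (Rot A B))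
    (F : Set (Matching I)) : Set (Rot A B) :=
  {r | r ∈ RotSet I ∧ ∀ M ∈ F, r ∉ RM M}

/-- `θ` is a meta-rotation of `F` (an equivalence class of `~`). -/
def IsMetaRot (I : SchoolInstance A B) (RM : Matching I → Set (Rot A B))
    (F : Set (Matching I)) (θ : Set (Rot A B)) : Prop :=
  ∃ r ∈ RotSet I, θ = {r' | r' ∈ RotSet I ∧ rotEquiv I RM F r r'}

/-- `θ` is a proper meta-rotation of `F`. -/
def IsProperMeta (I : SchoolInstance A B) (RM : Matching I → Set (Rot A B))
    (F : Set (Matching I)) (θ : Set (Rot A B)) : Prop :=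
  IsMetaRot I RM F θ ∧ θ ≠ theta0 I RM F ∧ θ ≠ thetaZ I RM F

/-- `θ ⊵^F θ'` on (proper) meta-rotations. -/
def metaDom (I : SchoolInstance A B) (RM : Matching I → Set (Rot A B))
    (F : Set (Matching I)) (θ θ' : Set (Rot A B)) : Prop :=
  ∀ M ∈ F, θ' ⊆ RM M → θ ⊆ RM M

/-- `Θ_M`: the set of proper meta-rotations contained in `R_M`. -/
def ThetaM (I : SchoolInstance A B) (RM : Matching I → Set (Rot A B))
    (F : Set (Matching I)) (M : Matching I) : Set (Set (Rot A B)) :=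
  {θ | IsProperMeta I RM F θ ∧ θ ⊆ RM M}

/-- `Θ` is an upper-closed set of proper meta-rotations. -/
def UCProper (I : SchoolInstance A B) (RM : Matching I → Set (Rot A B))
    (F : Set (Matching I)) (Θ : Set (Set (Rot A B))) : Prop :=
  (∀ θ ∈ Θ, IsProperMeta I RM F θ) ∧
    ∀ θ' ∈ Θ, ∀ θ, IsProperMeta I RM F θ → metaDom I RM F θ θ' → θ ∈ Θ

/-- `M_R`: the stable matching whose rotation set is `R` (via definite description). -/
def MofR (I : SchoolInstance A B) (RM : Matching I → Set (Rot A B))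
    (R : Set (Rot A B)) : Matching I :=
  Classical.epsilon fun M => Stable I M ∧ RM M = R

/-- `R^θ = θ₀^F ∪ ⋃ {θ' proper : θ' ⊵^F θ}`. -/
def Rup (I : SchoolInstance A B) (RM : Matching I → Set (Rot A B))
    (F : Set (Matching I)) (θ : Set (Rot A B)) : Set (Rot A B) :=
  theta0 I RM F ∪ ⋃₀ {θ' | IsProperMeta I RM F θ' ∧ metaDom I RM F θ' θ}

/-- `R_θ = θ₀^F ∪ ⋃ {θ' proper : θ' ▷^F θ}`. -/
def Rdn (I : SchoolInstance A B) (RM : Matching I → Set (Rot A B))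
    (F : Set (Matching I)) (θ : Set (Rot A B)) : Set (Rot A B) :=
  theta0 I RM F ∪ ⋃₀ {θ' | IsProperMeta I RM F θ' ∧ metaDom I RM F θ' θ ∧ θ' ≠ θ}

/-- `M^θ`. -/
def Mup (I : SchoolInstance A B) (RM : Matching I → Set (Rot A B))
    (F : Set (Matching I)) (θ : Set (Rot A B)) : Matching I :=
  MofR I RM (Rup I RM F θ)

/-- `M_θ`. -/
def Mdn (I : SchoolInstance A B) (RM : Matching I → Set (Rot A B))
    (F : Set (Matching I)) (θ : Set (Rot A B)) : Matching I :=
  MofR I RM (Rdn I RM F θ)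

/-- The meet `M ∧ M'` in the lattice of stable matchings (via definite description). -/
def meetM (I : SchoolInstance A B) (M M' : Matching I) : Matching I :=
  Classical.epsilon fun N => IsMeet I M M' N

/-- First order differential `∂f_θ = f(M^θ) − f(M_θ)`. -/
def d1 (I : SchoolInstance A B) (RM : Matching I → Set (Rot A B))
    (F : Set (Matching I)) (f : Matching I → ℝ) (θ : Set (Rot A B)) : ℝ :=
  f (Mup I RM F θ) - f (Mdn I RM F θ)

/-- Second order differential
`∂²f_{θ,θ'} = f(M^θ ∧ M_{θ'}) + f(M_θ ∧ M^{θ'}) − f(M_θ ∧ M_{θ'}) − f(M^θ ∧ M^{θ'})`. -/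
def d2 (I : SchoolInstance A B) (RM : Matching I → Set (Rot A B))
    (F : Set (Matching I)) (f : Matching I → ℝ) (θ θ' : Set (Rot A B)) : ℝ :=
  f (meetM I (Mup I RM F θ) (Mdn I RM F θ')) + f (meetM I (Mdn I RM F θ) (Mup I RM F θ'))
    - f (meetM I (Mdn I RM F θ) (Mdn I RM F θ')) - f (meetM I (Mup I RM F θ) (Mup I RM F θ'))

/-- The greatest element `M₀^F` of `F` (via definite description). -/
def topF (I : SchoolInstance A B) (F : Set (Matching I)) : Matching I :=
  Classical.epsilon fun N => N ∈ F ∧ ∀ P ∈ F, matGE I N P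

/-- Vertices of the digraph: all rotations, plus a source `s` and sink `t`. -/
abbrev Vtx (A B : Type) : Type := Rot A B ⊕ Bool

/-- The source `s`. -/
def srcV : Vtx A B := Sum.inr true

/-- The sink `t`. -/
def tgtV : Vtx A B := Sum.inr false

/-- The value of the cut `S` for the capacity function `u`: the total capacity
of the arcs leaving `S`. -/
def cutVal (u : Vtx A B → Vtx A B → ℝ≥0∞) (S : Set (Vtx A B)) : ℝ≥0∞ :=
  ∑ p : Vtx A B × Vtx A B, if p.1 ∈ S ∧ p.2 ∉ S then u p.1 p.2 else 0

/-- The `s`-`t` cut `{s} ∪ R`. -/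
def cutOf (R : Set (Rot A B)) : Set (Vtx A B) := insert srcV (Sum.inl '' R)

/-- `(u, C)` witnesses minimum cut representability of `Π(f, F)`: for every
`R ⊆ R(I)`, the cut `{s} ∪ R` has finite capacity iff `R` is upper-closed and
`M_R ∈ F`, and in that case its value is `f(M_R) + C`. -/
def MinCutRepWith (I : SchoolInstance A B) (RM : Matching I → Set (Rot A B))
    (F : Set (Matching I)) (f : Matching I → ℝ)
    (u : Vtx A B → Vtx A B → ℝ≥0∞) (C : ℝ) : Prop :=
  ∀ R : Set (Rot A B), R ⊆ RotSet I →
    ((cutVal u (cutOf R) ≠ ⊤ ↔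
        (UpperClosed I RM R ∧ ∃ M, Stable I M ∧ RM M = R ∧ M ∈ F)) ∧
      (∀ M, Stable I M → RM M = R → M ∈ F → (cutVal u (cutOf R)).toReal = f M + C))

/-- The problem `Π(f, F)` is minimum cut representable. -/
def MinCutRep (I : SchoolInstance A B) (RM : Matching I → Set (Rot A B))
    (F : Set (Matching I)) (f : Matching I → ℝ) : Prop :=
  ∃ u C, MinCutRepWith I RM F f u C

/-- The cut digraph `D^{f,F}` (with representative rotations `rep` and
constant `γ`); capacities of parallel arcs are added. -/
def cutDigraph (I : SchoolInstance A B) (RM : Matching I → Set (Rot A B))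
    (F : Set (Matching I)) (f : Matching I → ℝ)
    (rep : Set (Rot A B) → Rot A B) (γ : ℝ) : Vtx A B → Vtx A B → ℝ≥0∞ :=
  fun x y =>
    (if ∃ θ, IsMetaRot I RM F θ ∧ ∃ r ∈ θ, ∃ r' ∈ θ, r ≠ r' ∧ x = Sum.inl r ∧ y = Sum.inl r'
      then ⊤ else 0)
    + (if ∃ θ θ', IsProperMeta I RM F θ ∧ IsProperMeta I RM F θ' ∧ θ ≠ θ' ∧
          metaDom I RM F θ' θ ∧ x = Sum.inl (rep θ) ∧ y = Sum.inl (rep θ')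
        then ⊤ else 0)
    + (∑ θ : Set (Rot A B), ∑ θ' : Set (Rot A B),
        if IsProperMeta I RM F θ ∧ IsProperMeta I RM F θ' ∧ θ ≠ θ' ∧
            x = Sum.inl (rep θ) ∧ y = Sum.inl (rep θ')
        then ENNReal.ofReal ((1 / 2) * d2 I RM F f θ θ') else 0)
    + (if (theta0 I RM F).Nonempty ∧ x = srcV ∧ y = Sum.inl (rep (theta0 I RM F))
        then ⊤ else 0)
    + (if (thetaZ I RM F).Nonempty ∧ x = Sum.inl (rep (thetaZ I RM F)) ∧ y = tgtV
        then ⊤ else 0)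
    + (∑ θ : Set (Rot A B),
        if IsProperMeta I RM F θ ∧ x = Sum.inl (rep θ) ∧ y = tgtV
        then ENNReal.ofReal (d1 I RM F f θ -
          (1 / 2) * (∑ θ' : Set (Rot A B),
            if IsProperMeta I RM F θ' ∧ θ' ≠ θ then d2 I RM F f θ θ' else 0) + γ)
        else 0)
    + (∑ θ : Set (Rot A B),
        if IsProperMeta I RM F θ ∧ x = srcV ∧ y = Sum.inl (rep θ)
        then ENNReal.ofReal γ else 0)

/-- `b` prefers `S'` to `S''`: every member of `S'` is preferred to every
member of `S'' ∖ S'`. -/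
def prefersSet (I : SchoolInstance A B) (b : B) (S' S'' : Set (Option A)) : Prop :=
  ∀ x ∈ S', ∀ y ∈ S'', y ∉ S' → I.prefB b x y

/-- `A(ρ)`: students appearing in `ρ₊`. -/
def Aof (r : Rot A B) : Set A := {a | ∃ b : B, (some a, some b) ∈ r.1}

/-- `B(ρ)`: schools appearing in `ρ₊`. -/
def Bof (r : Rot A B) : Set B := {b | ∃ a : A, (some a, some b) ∈ r.1}

/-- `ρ₊(b)`: students matched to `b` in `ρ₊`. -/
def rhoPlusB (r : Rot A B) (b : B) : Set A := {a | (some a, some b) ∈ r.1}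

/-- `R^ρ = {ρ' : ρ' ⊵ ρ}`. -/
def RupRot (I : SchoolInstance A B) (RM : Matching I → Set (Rot A B))
    (r : Rot A B) : Set (Rot A B) :=
  {r' | r' ∈ RotSet I ∧ domRel I RM r' r}

/-- `R_ρ = {ρ' : ρ' ▷ ρ}`. -/
def RdnRot (I : SchoolInstance A B) (RM : Matching I → Set (Rot A B))
    (r : Rot A B) : Set (Rot A B) :=
  {r' | r' ∈ RotSet I ∧ strictDom I RM r' r}

/-- `M^ρ`. -/
def MupRot (I : SchoolInstance A B) (RM : Matching I → Set (Rot A B))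
    (r : Rot A B) : Matching I :=
  MofR I RM (RupRot I RM r)

/-- `M_ρ`. -/
def MdnRot (I : SchoolInstance A B) (RM : Matching I → Set (Rot A B))
    (r : Rot A B) : Matching I :=
  MofR I RM (RdnRot I RM r)

/-- First order differential of `f` at a rotation: `∂f_ρ = f(M^ρ) − f(M_ρ)`. -/
def d1Rot (I : SchoolInstance A B) (RM : Matching I → Set (Rot A B))
    (f : Matching I → ℝ) (r : Rot A B) : ℝ :=
  f (MupRot I RM r) - f (MdnRot I RM r)

/-- Second order differential of `f` at a pair of distinct rotations. -/
def d2Rot (I : SchoolInstance A B) (RM : Matching I → Set (Rot A B))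
    (f : Matching I → ℝ) (r r' : Rot A B) : ℝ :=
  f (meetM I (MupRot I RM r) (MdnRot I RM r')) + f (meetM I (MdnRot I RM r) (MupRot I RM r'))
    - f (meetM I (MdnRot I RM r) (MdnRot I RM r'))
    - f (meetM I (MupRot I RM r) (MupRot I RM r'))

/-- The pair `(ρ_in, ρ_out)` characterizes the stable matchings assigning both
siblings `a, ā` to school `b`. -/
def siblingChar (I : SchoolInstance A B) (RM : Matching I → Set (Rot A B))
    (a abar : A) (b : B) (p : Rot A B × Rot A B) : Prop :=
  ∀ M : Matching I, Stable I M →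
    ((M.toFun a = some b ∧ M.toFun abar = some b) ↔ (p.1 ∈ RM M ∧ p.2 ∉ RM M))

/-- Some stable matching assigns both `a` and `ā` to `b`. -/
def goodSchool (I : SchoolInstance A B) (a abar : A) (b : B) : Prop :=
  ∃ M, Stable I M ∧ M.toFun a = some b ∧ M.toFun abar = some b

/-- The pair `(ρ_in(a,ā,b), ρ_out(a,ā,b))` (via definite description). -/
def siblingPair (I : SchoolInstance A B) (RM : Matching I → Set (Rot A B))
    (a abar : A) (b : B) : Rot A B × Rot A B :=
  Classical.epsilon fun p => p.1 ∈ RotSet I ∧ p.2 ∈ RotSet I ∧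
    siblingChar I RM a abar b p ∧ strictDom I RM p.1 p.2

/-- `R_in(a, ā)`. -/
def Rin (I : SchoolInstance A B) (RM : Matching I → Set (Rot A B))
    (a abar : A) : Set (Rot A B) :=
  {r | ∃ b, goodSchool I a abar b ∧ r = (siblingPair I RM a abar b).1}

/-- `R_out(a, ā)`. -/
def Rout (I : SchoolInstance A B) (RM : Matching I → Set (Rot A B))
    (a abar : A) : Set (Rot A B) :=
  {r | ∃ b, goodSchool I a abar b ∧ r = (siblingPair I RM a abar b).2}

/-- The indicator function: `0` when the siblings are matched to the same
school, `1` otherwise. -/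
def sibIndicator (I : SchoolInstance A B) (a abar : A) : Matching I → ℝ :=
  fun M => if M.toFun a = M.toFun abar then 0 else 1

end SM

namespace SM

variable {A B : Type} [Fintype A] [Fintype B] [DecidableEq A] [DecidableEq B]

/-! ### Auxiliary development for `stmt1` -/

set_option linter.unusedSectionVars false

section Stmt1Aux

variable {I : SchoolInstance A B}

/-! #### Preference order facts -/

lemma pA_trans {a : A} {x y z : Option B} (h1 : I.prefA a x y) (h2 : I.prefA a y z) :
    I.prefA a x z :=
  (I.prefA_sto a).toIsTrans.trans x y z h1 h2

lemma pA_irrefl {a : A} {x : Option B} (h : I.prefA a x x) : False :=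
  by haveI := I.prefA_sto a; exact (irrefl x : ¬ I.prefA a x x) h

lemma pA_tri (I : SchoolInstance A B) (a : A) (x y : Option B) :
    I.prefA a x y ∨ x = y ∨ I.prefA a y x :=
  by
  by_contra h; push_neg at h; exact h.2.1 ((I.prefA_sto a).trichotomous x y h.1 h.2.2)

lemma pA_asymm {a : A} {x y : Option B} (h1 : I.prefA a x y) (h2 : I.prefA a y x) : False :=
  pA_irrefl (pA_trans h1 h2)

lemma pB_trans {b : B} {x y z : Option A} (h1 : I.prefB b x y) (h2 : I.prefB b y z) :
    I.prefB b x z :=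
  (I.prefB_sto b).toIsTrans.trans x y z h1 h2

lemma pB_tri (I : SchoolInstance A B) (b : B) (x y : Option A) :
    I.prefB b x y ∨ x = y ∨ I.prefB b y x :=
  by
  by_contra h; push_neg at h; exact h.2.1 ((I.prefB_sto b).trichotomous x y h.1 h.2.2)

/-- `x ⪰ₐ y`. -/
abbrev geA (I : SchoolInstance A B) (a : A) (x y : Option B) : Prop :=
  x = y ∨ I.prefA a x y

lemma geA_refl (a : A) (x : Option B) : geA I a x x := Or.inl rfl

lemma geA_of_gt {a : A} {x y : Option B} (h : I.prefA a x y) : geA I a x y := Or.inr h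

lemma geA_trans {a : A} {x y z : Option B} (h1 : geA I a x y) (h2 : geA I a y z) :
    geA I a x z := by
  rcases h1 with rfl | h1
  · exact h2
  · rcases h2 with rfl | h2
    · exact Or.inr h1
    · exact Or.inr (pA_trans h1 h2)

lemma geA_antisymm {a : A} {x y : Option B} (h1 : geA I a x y) (h2 : geA I a y x) : x = y := by
  rcases h1 with rfl | h1
  · rfl
  · rcases h2 with rfl | h2
    · rfl
    · exact absurd h2 fun h => pA_asymm h1 h

lemma gt_of_geA_ne {a : A} {x y : Option B} (h : geA I a x y) (hne : x ≠ y) :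
    I.prefA a x y := h.resolve_left hne

lemma gt_geA_trans {a : A} {x y z : Option B} (h1 : I.prefA a x y) (h2 : geA I a y z) :
    I.prefA a x z := by
  rcases h2 with rfl | h2
  · exact h1
  · exact pA_trans h1 h2

lemma geA_gt_trans {a : A} {x y z : Option B} (h1 : geA I a x y) (h2 : I.prefA a y z) :
    I.prefA a x z := by
  rcases h1 with rfl | h1
  · exact h2
  · exact pA_trans h1 h2

lemma not_geA_of_gt {a : A} {x y : Option B} (h : I.prefA a x y) : ¬ geA I a y x := by
  rintro (rfl | hp)
  · exact pA_irrefl h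
  · exact pA_asymm h hp

/-! #### Matching order facts -/

lemma Matching.ext' {M N : Matching I} (h : M.toFun = N.toFun) : M = N := by
  cases M; cases N; cases h; rfl

lemma matGE_iff {M N : Matching I} : matGE I M N ↔ ∀ a, geA I a (M.toFun a) (N.toFun a) :=
  Iff.rfl

lemma matGE_refl (M : Matching I) : matGE I M M := fun _ => Or.inl rfl

lemma matGE_trans {M N P : Matching I} (h1 : matGE I M N) (h2 : matGE I N P) : matGE I M P :=
  fun a => geA_trans (h1 a) (h2 a)

lemma matGE_antisymm {M N : Matching I} (h1 : matGE I M N) (h2 : matGE I N M) :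
    M.toFun = N.toFun :=
  funext fun a => geA_antisymm (h1 a) (h2 a)

lemma matLT_trans {X Y Z : Matching I} (h1 : matLT I X Y) (h2 : matLT I Y Z) :
    matLT I X Z := by
  refine ⟨matGE_trans h2.1 h1.1, fun he => ?_⟩
  have : Y.toFun = Z.toFun := by
    apply matGE_antisymm ?_ h2.1
    intro a
    rw [← congrFun he a]
    exact h1.1 a
  exact h1.2 (he.trans this.symm)

lemma matLT_irrefl (X : Matching I) : ¬ matLT I X X := fun h => h.2 rfl

/-! #### Stability facts -/

lemma Stable.noPair {M : Matching I} (hM : Stable I M) {a : A} {b : B}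
    (h : BlocksPair I M a b) : False := hM.1 ⟨a, b, h⟩

lemma stu_IR {M : Matching I} (hM : Stable I M) {a : A} {b : B} (h : M.toFun a = some b) :
    I.prefA a (some b) none := by
  rcases pA_tri I a (some b) none with h1 | h2 | h3
  · exact h1
  · exact absurd h2 (by simp)
  · exact absurd ⟨a, show I.prefA a none (M.toFun a) by rw [h]; exact h3⟩ hM.2.1

lemma sch_IR {M : Matching I} (hM : Stable I M) {z : A} {b : B} (h : M.toFun z = some b) :
    I.prefB b (some z) none := by
  rcases pB_tri I b (some z) none with h1 | h2 | h3
  · exact h1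
  · exact absurd h2 (by simp)
  · exact absurd ⟨b, z, h, h3⟩ hM.2.2

lemma assignedTo_le (M : Matching I) (b : B) : (assignedTo I M b).card ≤ I.q b := by
  have h := M.quota b
  unfold assignedTo
  convert h using 2
  exact (Finset.filter_congr_decidable ..).symm

lemma stab_school {M : Matching I} (hM : Stable I M) {a : A} {b : B}
    (hgt : I.prefA a (some b) (M.toFun a)) (h0 : I.prefB b (some a) none) :
    (assignedTo I M b).card = I.q b ∧
      ∀ y, M.toFun y = some b → I.prefB b (some y) (some a) := by
  constructor
  · by_contra hne
    have hq : (assignedTo I M b).card ≤ I.q b := assignedTo_le M b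
    have hs : hasSlack I M b := lt_of_le_of_ne hq hne
    exact hM.noPair ⟨hgt, none, Or.inr ⟨rfl, hs⟩, h0⟩
  · intro y hy
    have hya : y ≠ a := by
      rintro rfl
      rw [hy] at hgt
      exact pA_irrefl hgt
    rcases pB_tri I b (some y) (some a) with h | h | h
    · exact h
    · exact absurd (Option.some.inj h) hya
    · exact absurd ⟨hgt, some y, Or.inl ⟨y, rfl, hy⟩, h⟩ hM.noPair

/-! #### Counting -/

/-- Students assigned by a function to school `b`. -/
def asg (f : A → Option B) (b : B) : Finset A :=
  Finset.univ.filter fun a => f a = some b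

lemma mem_asg {f : A → Option B} {b : B} {a : A} : a ∈ asg f b ↔ f a = some b := by
  simp [asg]

lemma asg_eq (M : Matching I) (b : B) : assignedTo I M b = asg M.toFun b := rfl

lemma asg_card_le (M : Matching I) (b : B) : (asg M.toFun b).card ≤ I.q b := by
  rw [← asg_eq]; exact assignedTo_le M b

lemma hasSlack_iff {M : Matching I} {b : B} : hasSlack I M b ↔ (asg M.toFun b).card < I.q b := by
  unfold hasSlack
  rw [asg_eq]

lemma asg_sum (f : A → Option B) :
    ∑ b : B, (asg f b).card = (Finset.univ.filter fun a => f a ≠ none).card := by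
  rcases isEmpty_or_nonempty B with hB | hB
  · have h : ∀ a, f a = none := fun a => by
      cases hfa : f a with
      | none => rfl
      | some b => exact hB.elim b
    simp [h]
  · obtain ⟨b0⟩ := hB
    rw [Finset.card_eq_sum_card_fiberwise
      (f := fun a => (f a).getD b0) (t := Finset.univ) (fun x _ => Finset.mem_univ _)]
    apply Finset.sum_congr rfl
    intro b _
    congr 1
    ext a
    simp only [asg, Finset.mem_filter, Finset.mem_univ, true_and]
    cases hfa : f a <;> simp [hfa]
/-! #### Pointwise join and meet -/

/-- Pointwise student-optimal combination. -/
noncomputable def jf (I : SchoolInstance A B) (M N : Matching I) : A → Option B :=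
  fun a => if geA I a (M.toFun a) (N.toFun a) then M.toFun a else N.toFun a

/-- Pointwise student-pessimal combination. -/
noncomputable def mfn (I : SchoolInstance A B) (M N : Matching I) : A → Option B :=
  fun a => if geA I a (M.toFun a) (N.toFun a) then N.toFun a else M.toFun a

lemma geA_total (a : A) (x y : Option B) : geA I a x y ∨ geA I a y x := by
  rcases pA_tri I a x y with h | h | h
  · exact Or.inl (Or.inr h)
  · exact Or.inl (Or.inl h)
  · exact Or.inr (Or.inr h)

lemma jf_or (M N : Matching I) (a : A) :
    jf I M N a = M.toFun a ∨ jf I M N a = N.toFun a := by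
  unfold jf; split <;> [exact Or.inl rfl; exact Or.inr rfl]

lemma mfn_or (M N : Matching I) (a : A) :
    mfn I M N a = M.toFun a ∨ mfn I M N a = N.toFun a := by
  unfold mfn; split <;> [exact Or.inr rfl; exact Or.inl rfl]

lemma jf_pair (M N : Matching I) (a : A) :
    (jf I M N a = M.toFun a ∧ mfn I M N a = N.toFun a) ∨
      (jf I M N a = N.toFun a ∧ mfn I M N a = M.toFun a) := by
  unfold jf mfn; split <;> [exact Or.inl ⟨rfl, rfl⟩; exact Or.inr ⟨rfl, rfl⟩]

lemma jf_geM (M N : Matching I) (a : A) : geA I a (jf I M N a) (M.toFun a) := by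
  unfold jf; split_ifs with h
  · exact geA_refl a _
  · exact ((geA_total a _ _).resolve_left h)

lemma jf_geN (M N : Matching I) (a : A) : geA I a (jf I M N a) (N.toFun a) := by
  unfold jf; split_ifs with h
  · exact h
  · exact geA_refl a _

lemma mfn_leM (M N : Matching I) (a : A) : geA I a (M.toFun a) (mfn I M N a) := by
  unfold mfn; split_ifs with h
  · exact h
  · exact geA_refl a _

lemma mfn_leN (M N : Matching I) (a : A) : geA I a (N.toFun a) (mfn I M N a) := by
  unfold mfn; split_ifs with h
  · exact geA_refl a _
  · exact ((geA_total a _ _).resolve_left h)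

lemma jf_comm (M N : Matching I) : jf I M N = jf I N M := by
  funext a
  unfold jf
  by_cases h1 : geA I a (M.toFun a) (N.toFun a) <;>
    by_cases h2 : geA I a (N.toFun a) (M.toFun a)
  · rw [if_pos h1, if_pos h2]; exact geA_antisymm h1 h2
  · rw [if_pos h1, if_neg h2]
  · rw [if_neg h1, if_pos h2]
  · rw [if_neg h1, if_neg h2]; exact absurd ((geA_total a _ _).resolve_left h2) h1

lemma mfn_comm (M N : Matching I) : mfn I M N = mfn I N M := by
  funext a
  unfold mfn
  by_cases h1 : geA I a (M.toFun a) (N.toFun a) <;>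
    by_cases h2 : geA I a (N.toFun a) (M.toFun a)
  · rw [if_pos h1, if_pos h2]; exact geA_antisymm h2 h1
  · rw [if_pos h1, if_neg h2]
  · rw [if_neg h1, if_pos h2]
  · rw [if_neg h1, if_neg h2]; exact absurd ((geA_total a _ _).resolve_left h2) h1

/-- Key dichotomy: the set of students pointing at `b` under the join is contained in
`M`'s or in `N`'s set. -/
lemma jf_sub {M N : Matching I} (hM : Stable I M) (hN : Stable I N) (b : B) :
    asg (jf I M N) b ⊆ asg M.toFun b ∨ asg (jf I M N) b ⊆ asg N.toFun b := by
  by_cases hz : ∃ z, jf I M N z = some b ∧ M.toFun z ≠ some b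
  · right
    obtain ⟨z, hz1, hz2⟩ := hz
    have hNz : N.toFun z = some b := by
      rcases jf_or M N z with hc | hc
      · exact absurd (hc ▸ hz1) hz2
      · exact hc ▸ hz1
    have hgtz : I.prefA z (some b) (M.toFun z) := gt_of_geA_ne (hz1 ▸ jf_geM M N z) (Ne.symm hz2)
    have h0 : I.prefB b (some z) none := sch_IR hN hNz
    have hsch := stab_school hM hgtz h0
    intro w hw
    rw [mem_asg] at hw ⊢
    rcases jf_or M N w with hc | hc
    · by_contra hnw
      have hgtw : I.prefA w (some b) (N.toFun w) := gt_of_geA_ne (hw ▸ jf_geN M N w) (Ne.symm hnw)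
      exact hN.noPair ⟨hgtw, some z, Or.inl ⟨z, rfl, hNz⟩, hsch.2 w (hc ▸ hw)⟩
    · exact hc ▸ hw
  · left
    intro w hw
    rw [mem_asg] at hw ⊢
    push_neg at hz
    exact hz w hw

lemma jf_quota {M N : Matching I} (hM : Stable I M) (hN : Stable I N) (b : B) :
    (asg (jf I M N) b).card ≤ I.q b := by
  rcases jf_sub hM hN b with h | h
  · exact le_trans (Finset.card_le_card h) (asg_card_le M b)
  · exact le_trans (Finset.card_le_card h) (asg_card_le N b)

lemma matched_sub {M : Matching I} (hM : Stable I M) {g : A → Option B}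
    (hge : ∀ a, geA I a (g a) (M.toFun a)) :
    (Finset.univ.filter fun a => M.toFun a ≠ none) ⊆
      (Finset.univ.filter fun a => g a ≠ none) := by
  intro a ha
  simp only [Finset.mem_filter, Finset.mem_univ, true_and] at ha ⊢
  cases hMa : M.toFun a with
  | none => exact absurd hMa ha
  | some c =>
    intro hg
    have h1 : I.prefA a (some c) none := stu_IR hM hMa
    have h2 : geA I a none (some c) := by rw [← hg, ← hMa]; exact hge a
    rcases h2 with h2 | h2
    · exact absurd h2 (by simp)
    · exact pA_asymm h1 h2

lemma cnt_jf_le {M N : Matching I} (hM : Stable I M) (hN : Stable I N) (b : B) :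
    (asg (jf I M N) b).card ≤ (asg M.toFun b).card := by
  by_cases hz : ∃ z, jf I M N z = some b ∧ M.toFun z ≠ some b
  · obtain ⟨z, hz1, hz2⟩ := hz
    have hNz : N.toFun z = some b := by
      rcases jf_or M N z with hc | hc
      · exact absurd (hc ▸ hz1) hz2
      · exact hc ▸ hz1
    have hgtz : I.prefA z (some b) (M.toFun z) := gt_of_geA_ne (hz1 ▸ jf_geM M N z) (Ne.symm hz2)
    have hsch := stab_school hM hgtz (sch_IR hN hNz)
    rw [asg_eq] at hsch
    exact le_trans (jf_quota hM hN b) hsch.1.symm.le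
  · push_neg at hz
    apply Finset.card_le_card
    intro w hw
    rw [mem_asg] at hw ⊢
    exact hz w hw

lemma cnt_jf_eq {M N : Matching I} (hM : Stable I M) (hN : Stable I N) (b : B) :
    (asg (jf I M N) b).card = (asg M.toFun b).card := by
  by_contra hne
  have hb : (asg (jf I M N) b).card < (asg M.toFun b).card :=
    lt_of_le_of_ne (cnt_jf_le hM hN b) hne
  have hsum : ∑ c : B, (asg M.toFun c).card ≤ ∑ c : B, (asg (jf I M N) c).card := by
    rw [asg_sum, asg_sum]
    exact Finset.card_le_card (matched_sub hM (jf_geM M N))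
  have hlt : ∑ c : B, (asg (jf I M N) c).card < ∑ c : B, (asg M.toFun c).card :=
    Finset.sum_lt_sum (fun c _ => cnt_jf_le hM hN c) ⟨b, Finset.mem_univ b, hb⟩
  omega

/-- Rural hospitals (count version). -/
lemma RH {M N : Matching I} (hM : Stable I M) (hN : Stable I N) (b : B) :
    (asg M.toFun b).card = (asg N.toFun b).card := by
  rw [← cnt_jf_eq hM hN b, jf_comm, cnt_jf_eq hN hM b]

/-- The join as a matching. -/
noncomputable def Jm (M N : Matching I) (hM : Stable I M) (hN : Stable I N) : Matching I :=
  ⟨jf I M N, fun b => by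
    have h := jf_quota hM hN b
    unfold asg at h
    convert h using 2
    exact Finset.filter_congr_decidable ..⟩

@[simp] lemma Jm_toFun {M N : Matching I} (hM : Stable I M) (hN : Stable I N) :
    (Jm M N hM hN).toFun = jf I M N := rfl

lemma Jm_stable {M N : Matching I} (hM : Stable I M) (hN : Stable I N) :
    Stable I (Jm M N hM hN) := by
  refine ⟨?_, ?_, ?_⟩
  · rintro ⟨a, b, hgt, x, hx, hpx⟩
    rw [Jm_toFun] at hgt
    rcases hx with ⟨z, rfl, hz⟩ | ⟨rfl, hs⟩
    · rw [Jm_toFun] at hz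
      rcases jf_or M N z with hc | hc
      · exact hM.noPair ⟨gt_geA_trans hgt (jf_geM M N a), some z,
          Or.inl ⟨z, rfl, hc ▸ hz⟩, hpx⟩
      · exact hN.noPair ⟨gt_geA_trans hgt (jf_geN M N a), some z,
          Or.inl ⟨z, rfl, hc ▸ hz⟩, hpx⟩
    · have hsM : hasSlack I M b := by
        rw [hasSlack_iff] at hs ⊢
        rw [Jm_toFun] at hs
        rw [← cnt_jf_eq hM hN b]
        exact hs
      exact hM.noPair ⟨gt_geA_trans hgt (jf_geM M N a), none, Or.inr ⟨rfl, hsM⟩, hpx⟩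
  · rintro ⟨a, hstu⟩
    unfold BlocksStudent at hstu
    rw [Jm_toFun] at hstu
    rcases jf_or M N a with hc | hc <;> rw [hc] at hstu
    · exact hM.2.1 ⟨a, hstu⟩
    · exact hN.2.1 ⟨a, hstu⟩
  · rintro ⟨b, z, hz, h0⟩
    rw [Jm_toFun] at hz
    rcases jf_or M N z with hc | hc
    · exact hM.2.2 ⟨b, z, hc ▸ hz, h0⟩
    · exact hN.2.2 ⟨b, z, hc ▸ hz, h0⟩

lemma hasSlack_Jm_iff {M N : Matching I} (hM : Stable I M) (hN : Stable I N) {b : B} :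
    hasSlack I (Jm M N hM hN) b ↔ hasSlack I M b := by
  rw [hasSlack_iff, hasSlack_iff, Jm_toFun, cnt_jf_eq hM hN b]

/-! #### The meet -/

lemma cnt_pair (M N : Matching I) (b : B) :
    (asg (mfn I M N) b).card + (asg (jf I M N) b).card =
      (asg M.toFun b).card + (asg N.toFun b).card := by
  unfold asg
  rw [Finset.card_filter, Finset.card_filter, Finset.card_filter, Finset.card_filter,
    ← Finset.sum_add_distrib, ← Finset.sum_add_distrib]
  apply Finset.sum_congr rfl
  intro a _
  rcases jf_pair M N a with ⟨h1, h2⟩ | ⟨h1, h2⟩ <;> rw [h1, h2] <;> ring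

lemma cnt_mfn_eq {M N : Matching I} (hM : Stable I M) (hN : Stable I N) (b : B) :
    (asg (mfn I M N) b).card = (asg M.toFun b).card := by
  have hp := cnt_pair M N b
  have hj := cnt_jf_eq hM hN b
  have hj' : (asg (jf I M N) b).card = (asg N.toFun b).card := by
    rw [jf_comm]; exact cnt_jf_eq hN hM b
  omega

/-- The meet as a matching. -/
noncomputable def Km (M N : Matching I) (hM : Stable I M) (hN : Stable I N) : Matching I :=
  ⟨mfn I M N, fun b => by
    have h : (asg (mfn I M N) b).card ≤ I.q b := by
      rw [cnt_mfn_eq hM hN b]; exact asg_card_le M b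
    unfold asg at h
    convert h using 2
    exact Finset.filter_congr_decidable ..⟩

@[simp] lemma Km_toFun {M N : Matching I} (hM : Stable I M) (hN : Stable I N) :
    (Km M N hM hN).toFun = mfn I M N := rfl

/-- Auxiliary contradiction for the stability of the meet. -/
lemma meet_aux {M N : Matching I} (hM : Stable I M) (hN : Stable I N) {a z : A} {b : B}
    (hNz : N.toFun z = some b) (hMz : M.toFun z ≠ some b) (hJz : jf I M N z = M.toFun z)
    (hgt : I.prefA a (some b) (M.toFun a)) (hpref : I.prefB b (some a) (some z)) : False := by
  have hz0 : I.prefB b (some z) none := sch_IR hN hNz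
  have ha0 : I.prefB b (some a) none := pB_trans hpref hz0
  have hMab : M.toFun a ≠ some b := fun h => pA_irrefl (h ▸ hgt)
  rcases pA_tri I a (some b) (N.toFun a) with h1 | h2 | h3
  · exact hN.noPair ⟨h1, some z, Or.inl ⟨z, rfl, hNz⟩, hpref⟩
  · -- N a = some b
    have hjfa : jf I M N a = some b := by
      rcases jf_or M N a with hc | hc
      · -- jf a = M a; but jf a ⪰ N a = some b and M a ≺ some b: contradiction unless equal
        have hge : geA I a (M.toFun a) (some b) := by
          rw [← hc, h2]; exact jf_geN M N a
        rcases hge with he | hp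
        · exact absurd he hMab
        · exact absurd hp fun hp => pA_asymm hgt hp
      · rw [hc, ← h2]
    have hmem : a ∈ asg (jf I M N) b := mem_asg.2 hjfa
    rcases jf_sub hM hN b with hs | hs
    · exact hMab (mem_asg.1 (hs hmem))
    · have hcard : (asg N.toFun b).card ≤ (asg (jf I M N) b).card := by
        rw [jf_comm, cnt_jf_eq hN hM b]
      have heq := Finset.eq_of_subset_of_card_le hs hcard
      have hzmem : z ∈ asg (jf I M N) b := heq.symm ▸ mem_asg.2 hNz
      exact hMz (by rw [← hJz]; exact mem_asg.1 hzmem)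
  · -- N a ≻ some b
    have hsch := stab_school hM hgt ha0
    rw [asg_eq] at hsch
    have hNw : ∀ w, M.toFun w = some b → geA I w (N.toFun w) (some b) := by
      intro w hw
      by_contra hc
      have hgtw : I.prefA w (some b) (N.toFun w) := by
        rcases pA_tri I w (some b) (N.toFun w) with h | h | h
        · exact h
        · exact absurd (Or.inl h.symm) hc
        · exact absurd (Or.inr h) hc
      exact hN.noPair ⟨hgtw, some z, Or.inl ⟨z, rfl, hNz⟩, pB_trans (hsch.2 w hw) hpref⟩
    rcases jf_sub hM hN b with hs | hs
    · have hcard : (asg M.toFun b).card ≤ (asg (jf I M N) b).card := (cnt_jf_eq hM hN b).symm.le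
      have heq := Finset.eq_of_subset_of_card_le hs hcard
      have hMN : asg M.toFun b ⊆ asg N.toFun b := by
        intro w hw
        have hMw : M.toFun w = some b := mem_asg.1 hw
        have hjw : jf I M N w = some b := mem_asg.1 (heq.symm ▸ hw)
        rw [mem_asg]
        rcases jf_or M N w with hc | hc
        · have h1 : geA I w (some b) (N.toFun w) := by rw [← hjw]; exact jf_geN M N w
          exact (geA_antisymm h1 (hNw w hMw)).symm
        · rw [← hc, hjw]
      have heq2 : asg M.toFun b = asg N.toFun b :=
        Finset.eq_of_subset_of_card_le hMN (RH hM hN b).symm.le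
      exact hMz (mem_asg.1 (heq2.symm ▸ mem_asg.2 hNz))
    · have hcard : (asg N.toFun b).card ≤ (asg (jf I M N) b).card := by
        rw [jf_comm, cnt_jf_eq hN hM b]
      have heq := Finset.eq_of_subset_of_card_le hs hcard
      have hzmem : z ∈ asg (jf I M N) b := heq.symm ▸ mem_asg.2 hNz
      exact hMz (by rw [← hJz]; exact mem_asg.1 hzmem)

lemma Km_stable {M N : Matching I} (hM : Stable I M) (hN : Stable I N) :
    Stable I (Km M N hM hN) := by
  refine ⟨?_, ?_, ?_⟩
  · rintro ⟨a, b, hgt, x, hx, hpx⟩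
    rw [Km_toFun] at hgt
    rcases hx with ⟨z, rfl, hz⟩ | ⟨rfl, hs⟩
    · rw [Km_toFun] at hz
      -- z is genuinely a student with mfn z = some b
      have hz0 : I.prefB b (some z) none := by
        rcases mfn_or M N z with hc | hc
        · exact sch_IR hM (hc ▸ hz)
        · exact sch_IR hN (hc ▸ hz)
      rcases jf_pair M N a with ⟨hja, hka⟩ | ⟨hja, hka⟩ <;>
        rcases jf_pair M N z with ⟨hjz, hkz⟩ | ⟨hjz, hkz⟩
      · -- K a = N a, K z = N z : blocks N
        exact hN.noPair ⟨hka ▸ hgt, some z, Or.inl ⟨z, rfl, hkz ▸ hz⟩, hpx⟩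
      · -- K a = N a, K z = M z
        by_cases hNzb : N.toFun z = some b
        · exact hN.noPair ⟨hka ▸ hgt, some z, Or.inl ⟨z, rfl, hNzb⟩, hpx⟩
        · exact meet_aux hN hM (hkz ▸ hz) hNzb (by rw [← jf_comm]; exact hjz)
            (hka ▸ hgt) hpx
      · -- K a = M a, K z = N z
        by_cases hMzb : M.toFun z = some b
        · exact hM.noPair ⟨hka ▸ hgt, some z, Or.inl ⟨z, rfl, hMzb⟩, hpx⟩
        · exact meet_aux hM hN (hkz ▸ hz) hMzb hjz (hka ▸ hgt) hpx
      · -- K a = M a, K z = M z : blocks M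
        exact hM.noPair ⟨hka ▸ hgt, some z, Or.inl ⟨z, rfl, hkz ▸ hz⟩, hpx⟩
    · -- slack case
      have hsM : hasSlack I M b := by
        rw [hasSlack_iff] at hs ⊢
        rw [Km_toFun] at hs
        rw [← cnt_mfn_eq hM hN b]
        exact hs
      have hsN : hasSlack I N b := by
        rw [hasSlack_iff] at hsM ⊢
        rw [← RH hM hN b]
        exact hsM
      rcases mfn_or M N a with hc | hc
      · exact hM.noPair ⟨hc ▸ hgt, none, Or.inr ⟨rfl, hsM⟩, hpx⟩
      · exact hN.noPair ⟨hc ▸ hgt, none, Or.inr ⟨rfl, hsN⟩, hpx⟩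
  · rintro ⟨a, hstu⟩
    unfold BlocksStudent at hstu
    rw [Km_toFun] at hstu
    rcases mfn_or M N a with hc | hc <;> rw [hc] at hstu
    · exact hM.2.1 ⟨a, hstu⟩
    · exact hN.2.1 ⟨a, hstu⟩
  · rintro ⟨b, z, hz, h0⟩
    rw [Km_toFun] at hz
    rcases mfn_or M N z with hc | hc
    · exact hM.2.2 ⟨b, z, hc ▸ hz, h0⟩
    · exact hN.2.2 ⟨b, z, hc ▸ hz, h0⟩

/-! #### Order relations with join and meet -/

lemma matGE_Jm_left {M N : Matching I} (hM : Stable I M) (hN : Stable I N) :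
    matGE I (Jm M N hM hN) M := fun a => jf_geM M N a

lemma matGE_Jm_right {M N : Matching I} (hM : Stable I M) (hN : Stable I N) :
    matGE I (Jm M N hM hN) N := fun a => jf_geN M N a

lemma Jm_le {M N P : Matching I} (hM : Stable I M) (hN : Stable I N)
    (h1 : matGE I P M) (h2 : matGE I P N) : matGE I P (Jm M N hM hN) := by
  intro x
  show geA I x (P.toFun x) ((Jm M N hM hN).toFun x)
  rw [Jm_toFun]
  rcases jf_or M N x with h | h <;> rw [h]
  · exact h1 x
  · exact h2 x

lemma Km_le_left {M N : Matching I} (hM : Stable I M) (hN : Stable I N) :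
    matGE I M (Km M N hM hN) := fun a => mfn_leM M N a

lemma Km_le_right {M N : Matching I} (hM : Stable I M) (hN : Stable I N) :
    matGE I N (Km M N hM hN) := fun a => mfn_leN M N a

lemma imm_squeeze {M' M Z : Matching I} (h : ImmPred I M' M) (hZ : Stable I Z)
    (h1 : matGE I Z M') (h2 : matGE I M Z) :
    Z.toFun = M'.toFun ∨ Z.toFun = M.toFun := by
  by_contra hc
  push_neg at hc
  exact h.2.2.2 ⟨Z, hZ, ⟨h1, Ne.symm hc.1⟩, ⟨h2, hc.2⟩⟩

/-! #### Rotations -/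

lemma mem_pairsOf {M : Matching I} {p : Option A × Option B} :
    p ∈ pairsOf I M ↔
      ((∃ x : A, p = (some x, M.toFun x)) ∨ ∃ b : B, hasSlack I M b ∧ p = (none, some b)) := by
  unfold pairsOf
  simp only [Finset.mem_filter, Finset.mem_univ, true_and]

lemma mem_rho1 {M M' : Matching I} (hM : Stable I M) (hM' : Stable I M')
    {p : Option A × Option B} :
    p ∈ (rho I M M').1 ↔ ∃ x : A, M.toFun x ≠ M'.toFun x ∧ p = (some x, M.toFun x) := by
  show p ∈ pairsOf I M \ pairsOf I M' ↔ _
  rw [Finset.mem_sdiff]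
  constructor
  · rintro ⟨hp1, hp2⟩
    rcases mem_pairsOf.1 hp1 with ⟨x, rfl⟩ | ⟨b, hb, rfl⟩
    · exact ⟨x, fun he => hp2 (mem_pairsOf.2 (Or.inl ⟨x, by rw [he]⟩)), rfl⟩
    · have hb' : hasSlack I M' b := by
        rw [hasSlack_iff] at hb ⊢
        rw [RH hM' hM b]
        exact hb
      exact absurd (mem_pairsOf.2 (Or.inr ⟨b, hb', rfl⟩)) hp2
  · rintro ⟨x, hne, rfl⟩
    refine ⟨mem_pairsOf.2 (Or.inl ⟨x, rfl⟩), fun hc => ?_⟩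
    rcases mem_pairsOf.1 hc with ⟨y, he⟩ | ⟨b, -, he⟩
    · rw [Prod.mk.injEq] at he
      obtain ⟨hh1, hh2⟩ := he
      cases Option.some.inj hh1
      exact hne hh2
    · simp at he

lemma mem_rho2 {M M' : Matching I} (hM : Stable I M) (hM' : Stable I M')
    {p : Option A × Option B} :
    p ∈ (rho I M M').2 ↔ ∃ x : A, M.toFun x ≠ M'.toFun x ∧ p = (some x, M'.toFun x) := by
  have h := mem_rho1 hM' hM (p := p)
  show p ∈ pairsOf I M' \ pairsOf I M ↔ _
  rw [show pairsOf I M' \ pairsOf I M = (rho I M' M).1 from rfl, h]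
  constructor
  · rintro ⟨x, hne, rfl⟩; exact ⟨x, Ne.symm hne, rfl⟩
  · rintro ⟨x, hne, rfl⟩; exact ⟨x, Ne.symm hne, rfl⟩

/-- Uniqueness of the rotation through a given student-school pair, comparable case. -/
lemma comp_uniq {M1 M1' M2 M2' : Matching I} {a : A}
    (h1 : ImmPred I M1' M1) (h2 : ImmPred I M2' M2) (h12 : matGE I M1 M2)
    (ha : M1.toFun a = M2.toFun a) (ha1 : M1'.toFun a ≠ M1.toFun a)
    (ha2 : M2'.toFun a ≠ M2.toFun a) :
    rho I M1 M1' = rho I M2 M2' := by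
  obtain ⟨hs1', hs1, hlt1, hni1⟩ := id h1
  obtain ⟨hs2', hs2, hlt2, hni2⟩ := id h2
  have hge1 : matGE I M1 M1' := hlt1.1
  have hge2 : matGE I M2 M2' := hlt2.1
  have gt1a : I.prefA a (M1.toFun a) (M1'.toFun a) := gt_of_geA_ne (hge1 a) (Ne.symm ha1)
  have gt2a : I.prefA a (M2.toFun a) (M2'.toFun a) := gt_of_geA_ne (hge2 a) (Ne.symm ha2)
  have gt1a' : I.prefA a (M2.toFun a) (M1'.toFun a) := ha ▸ gt1a
  have gt2a' : I.prefA a (M1.toFun a) (M2'.toFun a) := ha.symm ▸ gt2a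
  have hcond : ¬ geA I a (M1'.toFun a) (M2.toFun a) := not_geA_of_gt gt1a'
  -- (*) the join of M1' and M2 is M1
  have hE1 : ∀ x, jf I M1' M2 x = M1.toFun x := by
    have hJle : matGE I M1 (Jm M1' M2 hs1' hs2) := Jm_le hs1' hs2 hge1 h12
    have hJge : matGE I (Jm M1' M2 hs1' hs2) M1' := matGE_Jm_left hs1' hs2
    have hJa : (Jm M1' M2 hs1' hs2).toFun a = M1.toFun a := by
      show jf I M1' M2 a = M1.toFun a
      unfold jf
      rw [if_neg hcond, ← ha]
    rcases imm_squeeze h1 (Jm_stable hs1' hs2) hJge hJle with h | h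
    · exact absurd ((congrFun h a).symm.trans hJa) ha1
    · exact fun x => congrFun h x
  -- (***) M2' ≤ M1'
  have hE2 : ∀ x, geA I x (M1'.toFun x) (M2'.toFun x) := by
    have hJle : matGE I M1 (Jm M2' M1' hs2' hs1') :=
      Jm_le hs2' hs1' (matGE_trans h12 hge2) hge1
    have hJge : matGE I (Jm M2' M1' hs2' hs1') M1' := matGE_Jm_right hs2' hs1'
    have hJa : (Jm M2' M1' hs2' hs1').toFun a ≠ M1.toFun a := by
      rw [Jm_toFun]
      rcases jf_or M2' M1' a with h | h <;> rw [h]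
      · exact fun he => pA_irrefl (he ▸ gt2a')
      · exact ha1
    rcases imm_squeeze h1 (Jm_stable hs2' hs1') hJge hJle with h | h
    · intro x
      rw [← congrFun h x, Jm_toFun]
      exact jf_geM M2' M1' x
    · exact absurd (congrFun h a) hJa
  -- (**) the meet of M1' and M2 is below M2'
  have hK1a : mfn I M1' M2 a = M1'.toFun a := by
    unfold mfn
    rw [if_neg hcond]
  have hE3 : ∀ x, geA I x (M2'.toFun x) (mfn I M1' M2 x) := by
    have hKs : Stable I (Km M1' M2 hs1' hs2) := Km_stable hs1' hs2
    have hJle : matGE I M2 (Jm (Km M1' M2 hs1' hs2) M2' hKs hs2') :=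
      Jm_le hKs hs2' (Km_le_right hs1' hs2) hge2
    have hJge : matGE I (Jm (Km M1' M2 hs1' hs2) M2' hKs hs2') M2' :=
      matGE_Jm_right hKs hs2'
    have hJa : (Jm (Km M1' M2 hs1' hs2) M2' hKs hs2').toFun a ≠ M2.toFun a := by
      rw [Jm_toFun]
      rcases jf_or (Km M1' M2 hs1' hs2) M2' a with h | h <;> rw [h]
      · show ¬ mfn I M1' M2 a = M2.toFun a
        rw [hK1a]
        exact fun he => pA_irrefl (he ▸ gt1a')
      · exact fun he => pA_irrefl (he ▸ gt2a)
    rcases imm_squeeze h2 (Jm_stable hKs hs2') hJge hJle with h | h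
    · intro x
      rw [← congrFun h x, Jm_toFun]
      exact jf_geM (Km M1' M2 hs1' hs2) M2' x
    · exact absurd (congrFun h a) hJa
  -- changed students coincide, with identical assignments
  have hchg : ∀ x, M1'.toFun x ≠ M1.toFun x →
      M2.toFun x = M1.toFun x ∧ M2'.toFun x = M1'.toFun x ∧ M2'.toFun x ≠ M2.toFun x := by
    intro x hx
    have h21 : M2.toFun x = M1.toFun x := by
      rcases jf_or M1' M2 x with hc | hc <;> rw [hE1 x] at hc
      · exact absurd hc.symm hx
      · exact hc.symm
    have gt1x : I.prefA x (M1.toFun x) (M1'.toFun x) := gt_of_geA_ne (hge1 x) (Ne.symm hx)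
    have hcondx : ¬ geA I x (M1'.toFun x) (M2.toFun x) := by
      rw [h21]
      exact not_geA_of_gt gt1x
    have hmfx : mfn I M1' M2 x = M1'.toFun x := by
      unfold mfn
      rw [if_neg hcondx]
    have heqx : M2'.toFun x = M1'.toFun x := geA_antisymm (hmfx ▸ hE3 x) (hE2 x)
    refine ⟨h21, heqx, ?_⟩
    rw [heqx, h21]
    exact hx
  have hchg2 : ∀ x, M2'.toFun x ≠ M2.toFun x → M1'.toFun x ≠ M1.toFun x := by
    intro x hx2 hx1
    have hcondx : geA I x (M1'.toFun x) (M2.toFun x) := by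
      rw [hx1]
      exact h12 x
    have hmfx : mfn I M1' M2 x = M2.toFun x := by
      unfold mfn
      rw [if_pos hcondx]
    exact hx2 (geA_antisymm (hmfx ▸ hE3 x) (hge2 x))
  -- conclude
  have hr1 : (rho I M1 M1').1 = (rho I M2 M2').1 := by
    ext p
    rw [mem_rho1 hs1 hs1', mem_rho1 hs2 hs2']
    constructor
    · rintro ⟨x, hne, rfl⟩
      have hx := hchg x (Ne.symm hne)
      exact ⟨x, fun he => hx.2.2 he.symm, by rw [hx.1]⟩
    · rintro ⟨x, hne, rfl⟩
      have hx1 : M1'.toFun x ≠ M1.toFun x := hchg2 x (Ne.symm hne)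
      have hx := hchg x hx1
      exact ⟨x, Ne.symm hx1, by rw [hx.1]⟩
  have hr2 : (rho I M1 M1').2 = (rho I M2 M2').2 := by
    ext p
    rw [mem_rho2 hs1 hs1', mem_rho2 hs2 hs2']
    constructor
    · rintro ⟨x, hne, rfl⟩
      have hx := hchg x (Ne.symm hne)
      exact ⟨x, fun he => hx.2.2 he.symm, by rw [hx.2.1]⟩
    · rintro ⟨x, hne, rfl⟩
      have hx1 : M1'.toFun x ≠ M1.toFun x := hchg2 x (Ne.symm hne)
      have hx := hchg x hx1
      exact ⟨x, Ne.symm hx1, by rw [hx.2.1]⟩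
  exact Prod.ext hr1 hr2

noncomputable instance : Fintype (Matching I) :=
  Fintype.ofInjective Matching.toFun fun _ _ h => Matching.ext' h

/-- Descent: below a stable matching assigning `a` to `c` which is not the bottom for `a`,
there is one exposing a rotation moving `a` away from `c`. -/
lemma descend {a : A} {c : Option B} {Y0 : Matching I} (hY0 : Stable I Y0)
    (hY0a : Y0.toFun a ≠ c) :
    ∀ n (X : Matching I),
      (Finset.univ.filter fun Z : Matching I => Stable I Z ∧ matLT I Z X).card ≤ n →
      Stable I X → X.toFun a = c → matGE I X Y0 →
      ∃ W W' : Matching I, matGE I X W ∧ Stable I W ∧ W.toFun a = c ∧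
        ImmPred I W' W ∧ W'.toFun a ≠ c := by
  intro n
  induction n with
  | zero =>
    intro X hcard hX hXa hXY
    exfalso
    have hmem : Y0 ∈ Finset.univ.filter fun Z : Matching I => Stable I Z ∧ matLT I Z X := by
      simp only [Finset.mem_filter, Finset.mem_univ, true_and]
      exact ⟨hY0, hXY, fun he => hY0a (by rw [congrFun he a, hXa])⟩
    have := Finset.card_pos.2 ⟨Y0, hmem⟩
    omega
  | succ n ih =>
    intro X hcard hX hXa hXY
    have hSne : (Finset.univ.filter fun Z : Matching I =>
        Stable I Z ∧ matLT I Z X ∧ matGE I Z Y0).Nonempty := by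
      refine ⟨Y0, ?_⟩
      simp only [Finset.mem_filter, Finset.mem_univ, true_and]
      exact ⟨hY0, ⟨hXY, fun he => hY0a (by rw [congrFun he a, hXa])⟩, matGE_refl Y0⟩
    obtain ⟨Z, hZS, hZmin⟩ := Finset.exists_min_image _
      (fun Z => ((Finset.univ.filter fun W : Matching I =>
        Stable I W ∧ matLT I W X ∧ matGE I W Y0).filter fun V => matLT I Z V).card) hSne
    simp only [Finset.mem_filter, Finset.mem_univ, true_and] at hZS
    obtain ⟨hZst, hZlt, hZY0⟩ := hZS
    have hZmax : ∀ V : Matching I, Stable I V → matLT I Z V → matLT I V X → False := by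
      intro V hVst hZV hVX
      have hVS : V ∈ Finset.univ.filter fun W : Matching I =>
          Stable I W ∧ matLT I W X ∧ matGE I W Y0 := by
        simp only [Finset.mem_filter, Finset.mem_univ, true_and]
        exact ⟨hVst, hVX, matGE_trans hZV.1 hZY0⟩
      have hsub : ((Finset.univ.filter fun W : Matching I =>
            Stable I W ∧ matLT I W X ∧ matGE I W Y0).filter fun W => matLT I V W) ⊂
          ((Finset.univ.filter fun W : Matching I =>
            Stable I W ∧ matLT I W X ∧ matGE I W Y0).filter fun W => matLT I Z W) := by
        refine ⟨fun W hW => ?_, fun hno => ?_⟩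
        · rw [Finset.mem_filter] at hW ⊢
          exact ⟨hW.1, matLT_trans hZV hW.2⟩
        · have hVmem := hno (Finset.mem_filter.2 ⟨hVS, hZV⟩)
          rw [Finset.mem_filter] at hVmem
          exact matLT_irrefl V hVmem.2
      have hlt := Finset.card_lt_card hsub
      have hle := hZmin V hVS
      omega
    have hZimm : ImmPred I Z X := by
      refine ⟨hZst, hX, hZlt, ?_⟩
      rintro ⟨V, hVst, hv1, hv2⟩
      exact hZmax V hVst hv1 hv2
    by_cases hZa : Z.toFun a = c
    · have hss : (Finset.univ.filter fun V : Matching I => Stable I V ∧ matLT I V Z) ⊂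
          (Finset.univ.filter fun V : Matching I => Stable I V ∧ matLT I V X) := by
        refine ⟨fun W hW => ?_, fun hno => ?_⟩
        · simp only [Finset.mem_filter, Finset.mem_univ, true_and] at hW ⊢
          exact ⟨hW.1, matLT_trans hW.2 hZlt⟩
        · have hZmem := hno (Finset.mem_filter.2 ⟨Finset.mem_univ Z, hZst, hZlt⟩)
          simp only [Finset.mem_filter, Finset.mem_univ, true_and] at hZmem
          exact matLT_irrefl Z hZmem.2
      have hcard' := Finset.card_lt_card hss
      obtain ⟨W, W', hW1, hW2, hW3, hW4, hW5⟩ :=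
        ih Z (by omega) hZst hZa hZY0
      exact ⟨W, W', matGE_trans hZlt.1 hW1, hW2, hW3, hW4, hW5⟩
    · exact ⟨X, Z, matGE_refl X, hX, hXa, hZimm, hZa⟩

/-- Main uniqueness: rotations moving a common student out of a common assignment coincide. -/
lemma rho_unique {M1 M1' M2 M2' : Matching I} {a : A}
    (h1 : ImmPred I M1' M1) (h2 : ImmPred I M2' M2)
    (ha : M1.toFun a = M2.toFun a) (ha1 : M1'.toFun a ≠ M1.toFun a)
    (ha2 : M2'.toFun a ≠ M2.toFun a) :
    rho I M1 M1' = rho I M2 M2' := by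
  obtain ⟨hs1', hs1, hlt1, -⟩ := id h1
  obtain ⟨hs2', hs2, hlt2, -⟩ := id h2
  have hXst : Stable I (Km M1 M2 hs1 hs2) := Km_stable hs1 hs2
  have hXa : (Km M1 M2 hs1 hs2).toFun a = M1.toFun a := by
    rw [Km_toFun]
    rcases mfn_or M1 M2 a with h | h <;> rw [h]
    exact ha.symm
  have gt1a : I.prefA a (M1.toFun a) (M1'.toFun a) := gt_of_geA_ne (hlt1.1 a) (Ne.symm ha1)
  have hY0st : Stable I (Km M1' (Km M1 M2 hs1 hs2) hs1' hXst) := Km_stable hs1' hXst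
  have hY0a : (Km M1' (Km M1 M2 hs1 hs2) hs1' hXst).toFun a ≠ M1.toFun a := by
    have hcond : ¬ geA I a (M1'.toFun a) ((Km M1 M2 hs1 hs2).toFun a) := by
      rw [hXa]
      exact not_geA_of_gt gt1a
    have hmf : (Km M1' (Km M1 M2 hs1 hs2) hs1' hXst).toFun a = M1'.toFun a := by
      rw [Km_toFun]
      unfold mfn
      rw [if_neg hcond]
    rw [hmf]
    exact ha1
  obtain ⟨W, W', hW1, hWst, hWa, hWimm, hW'a⟩ :=
    descend hY0st hY0a _ (Km M1 M2 hs1 hs2) le_rfl hXst hXa (Km_le_right hs1' hXst)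
  have e1 := comp_uniq h1 hWimm (matGE_trans (Km_le_left hs1 hs2) hW1) hWa.symm ha1
    (fun he => hW'a (he.trans hWa))
  have e2 := comp_uniq h2 hWimm (matGE_trans (Km_le_right hs1 hs2) hW1)
    (ha.symm.trans hWa.symm) ha2 (fun he => hW'a (he.trans hWa))
  exact e1.trans e2.symm

end Stmt1Aux


/-- `|R(I)| ≤ n²`. -/
theorem stmt1 (I : SchoolInstance A B) :
    (RotSet I).ncard ≤ (Fintype.card A + Fintype.card B) ^ 2 := by
  classical
  rcases isEmpty_or_nonempty A with hA | hA
  · have hempty : RotSet I = ∅ := by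
      ext r
      simp only [RotSet, Set.mem_setOf_eq, Set.mem_empty_iff_false, iff_false]
      rintro ⟨M, M', himm, -⟩
      exact himm.2.2.1.2 (funext fun x => hA.elim x)
    rw [hempty]
    simp
  · have hkey : ∀ r ∈ RotSet I, ∃ p : A × Option B, ∃ M M' : Matching I,
        ImmPred I M' M ∧ r = rho I M M' ∧ M.toFun p.1 = p.2 ∧ M'.toFun p.1 ≠ p.2 := by
      rintro r ⟨M, M', himm, rfl⟩
      obtain ⟨x, hx⟩ := Function.ne_iff.1 himm.2.2.1.2
      exact ⟨(x, M.toFun x), M, M', himm, rfl, rfl, hx⟩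
    choose! p hp using hkey
    have hinj : Set.InjOn p (RotSet I) := by
      intro r1 h1 r2 h2 hpe
      obtain ⟨Ma, Ma', hia, hra, hma, hma'⟩ := hp r1 h1
      obtain ⟨Mb, Mb', hib, hrb, hmb, hmb'⟩ := hp r2 h2
      rw [← hpe] at hmb hmb'
      rw [hra, hrb]
      exact rho_unique hia hib (hma.trans hmb.symm)
        (fun he => hma' (he.trans hma)) (fun he => hmb' (he.trans hmb))
    have hb := Set.ncard_le_ncard_of_injOn p (fun r _ => Set.mem_univ (p r)) hinj
      Set.finite_univ
    rw [Set.ncard_univ, Nat.card_eq_fintype_card, Fintype.card_prod,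
      Fintype.card_option] at hb
    have hA1 : 1 ≤ Fintype.card A := Fintype.card_pos
    refine le_trans hb ?_
    nlinarith [sq_nonneg (Fintype.card A + Fintype.card B)]

end SM
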